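/- Let v : ℂ → ℝ be continuous and subharmonic, let K be a compact set with connected complement, and suppose the Riesz measure Δv is supported on ∂K. Let U be a connected component of the interior of K and suppose Δv(closure of U) = 0. If u is a continuous subharmonic function on ℂ coinciding with v outside U, then the function w = max(u, v) on U extended by v on ℂ \ U is subharmonic on ℂ. -/
import Mathlib


open Metric intervalIntegral MeasureTheory

/-- `u` satisfies the sub-mean value inequality on circles contained (with their disk)
in `s`, together with continuity: a continuous subharmonic function on `s`. -/
def SubharmonicOnC (u : ℂ → ℝ) (s : Set ℂ) : Prop :=
  ContinuousOn u s ∧ ∀ z : ℂ, ∀ r : ℝ, 0 < r → closedBall z r ⊆ s →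
    u z ≤ (2 * Real.pi)⁻¹ *
      ∫ θ in (0 : ℝ)..2 * Real.pi, u (z + r * Complex.exp (θ * Complex.I))

/-- The Laplacian of a (twice differentiable) function `φ : ℂ → ℝ`, as the sum of the
second derivatives in the directions `1` and `I`. -/
noncomputable def lap (φ : ℂ → ℝ) (z : ℂ) : ℝ :=
  fderiv ℝ (fun w => fderiv ℝ φ w 1) z 1 +
    fderiv ℝ (fun w => fderiv ℝ φ w Complex.I) z Complex.I

/-- `μ` is the Riesz measure (distributional Laplacian) of `v`:
`∫ v Δφ = ∫ φ dμ` for all `C²` compactly supported test functions `φ`. -/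
def IsRieszMeasure (v : ℂ → ℝ) (μ : Measure ℂ) : Prop :=
  ∀ φ : ℂ → ℝ, ContDiff ℝ 2 φ → HasCompactSupport φ →
    ∫ z : ℂ, v z * lap φ z = ∫ z : ℂ, φ z ∂μ

open Classical in
/-- Let `v` be continuous subharmonic on `ℂ` with Riesz measure `Δv` supported on the
boundary of a compact set `K` with connected complement. Let `U` be a connected
component of the interior of `K` with `Δv(closure U) = 0`. If `u` is continuous
subharmonic on `ℂ` and coincides with `v` outside `U`, then the gluing
`w = max(u, v)` on `U`, `= v` off `U`, is subharmonic on `ℂ`. -/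
theorem glued_max_subharmonic (v u : ℂ → ℝ) (K U : Set ℂ) (μ : Measure ℂ)
    (hv : Continuous v) (hvsub : SubharmonicOnC v Set.univ)
    (hK : IsCompact K) (hKc : IsConnected Kᶜ)
    (hμ : IsRieszMeasure v μ)
    (hsupp : μ (frontier K)ᶜ = 0)
    (hUcomp : ∃ x ∈ interior K, U = connectedComponentIn (interior K) x)
    (hUnull : μ (closure U) = 0)
    (hu : Continuous u) (husub : SubharmonicOnC u Set.univ)
    (heq : Set.EqOn u v Uᶜ) :
    SubharmonicOnC (fun z => if z ∈ U then max (u z) (v z) else v z) Set.univ := by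
  have hfun : (fun z => if z ∈ U then max (u z) (v z) else v z) = fun z => max (u z) (v z) := by
    funext z
    by_cases hz : z ∈ U
    · simp [hz]
    · simp [hz, heq hz]
  rw [hfun]
  refine ⟨(hu.max hv).continuousOn, fun z r hr hsub => ?_⟩
  have hiu : IntervalIntegrable (fun θ : ℝ => u (z + r * Complex.exp (θ * Complex.I)))
      volume 0 (2 * Real.pi) := by
    apply Continuous.intervalIntegrable
    continuity
  have hiv : IntervalIntegrable (fun θ : ℝ => v (z + r * Complex.exp (θ * Complex.I)))
      volume 0 (2 * Real.pi) := by
    apply Continuous.intervalIntegrable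
    continuity
  have him : IntervalIntegrable (fun θ : ℝ => max (u (z + r * Complex.exp (θ * Complex.I)))
      (v (z + r * Complex.exp (θ * Complex.I)))) volume 0 (2 * Real.pi) := by
    apply Continuous.intervalIntegrable
    continuity
  have hpi : (0:ℝ) ≤ (2 * Real.pi)⁻¹ := by positivity
  have h2pi : (0:ℝ) ≤ 2 * Real.pi := by positivity
  beta_reduce
  rcases le_total (u z) (v z) with h | h
  · rw [max_eq_right h]
    refine (hvsub.2 z r hr (Set.subset_univ _)).trans ?_
    refine mul_le_mul_of_nonneg_left ?_ hpi
    exact intervalIntegral.integral_mono_on h2pi hiv him (fun θ _ => le_max_right _ _)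
  · rw [max_eq_left h]
    refine (husub.2 z r hr (Set.subset_univ _)).trans ?_
    refine mul_le_mul_of_nonneg_left ?_ hpi
    exact intervalIntegral.integral_mono_on h2pi hiu him (fun θ _ => le_max_left _ _)
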